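/- Let $n \geq 3$, $1 \leq k < n/2$, and write points of $\mathbb{R}^n$ as $(x,y)$ with $x \in \mathbb{R}^{n-k}$, $y \in \mathbb{R}^k$. Then for any constant $C > 0$ there exists $\rho > 0$ such that the function $w(x,y) = C|x|^{2-2k/n}(1+|y|^2)$ is convex on the slab $\{(x,y) : |y| < \rho\}$. -/

import Mathlib

open Real Set

private lemma combo_abs_lt {a b x y ρ : ℝ} (ha : 0 ≤ a) (hb : 0 ≤ b) (hab : a + b = 1)
    (hx : |x| < ρ) (hy : |y| < ρ) : |a * x + b * y| < ρ := by
  calc |a * x + b * y| ≤ a * |x| + b * |y| := by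
        calc |a * x + b * y| ≤ |a * x| + |b * y| := abs_add_le _ _
        _ = a * |x| + b * |y| := by rw [abs_mul, abs_mul, abs_of_nonneg ha, abs_of_nonneg hb]
    _ ≤ a * max |x| |y| + b * max |x| |y| := by gcongr; exact le_max_left _ _; exact le_max_right _ _
    _ = max |x| |y| := by rw [← add_mul, hab, one_mul]
    _ < ρ := max_lt hx hy

private lemma seg_convex {α ρ : ℝ} (hα1 : 1 < α) (hα2 : α < 2)
    (hρ : ρ ^ 2 = (α - 1) / (α + 1))
    (s0 u r0 v : ℝ) (hs0 : 0 ≤ s0) (hs1 : 0 ≤ s0 + u)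
    (hr0 : |r0| < ρ) (hr1 : |r0 + v| < ρ) :
    ConvexOn ℝ (Icc (0:ℝ) 1) (fun t => (s0 + t * u) ^ α * (1 + (r0 + t * v) ^ 2)) := by
  have hα0 : (0:ℝ) < α := by linarith
  -- basic facts about S and R along the segment
  have hSnn : ∀ t ∈ Icc (0:ℝ) 1, 0 ≤ s0 + t * u := by
    intro t ht
    have : s0 + t * u = (1 - t) * s0 + t * (s0 + u) := by ring
    rw [this]
    exact add_nonneg (mul_nonneg (by linarith [ht.2]) hs0) (mul_nonneg ht.1 hs1)
  have hRlt : ∀ t ∈ Icc (0:ℝ) 1, |r0 + t * v| < ρ := by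
    intro t ht
    have : r0 + t * v = (1 - t) * r0 + t * (r0 + v) := by ring
    rw [this]
    exact combo_abs_lt (by linarith [ht.2]) ht.1 (by ring) hr0 hr1
  by_cases hdeg : s0 = 0 ∧ s0 + u = 0
  · have hu : u = 0 := by linarith [hdeg.1, hdeg.2]
    have : (fun t => (s0 + t * u) ^ α * (1 + (r0 + t * v) ^ 2)) = fun _ => (0:ℝ) := by
      funext t
      rw [hdeg.1, hu]
      simp [Real.zero_rpow (ne_of_gt hα0)]
    rw [this]
    exact convexOn_const 0 (convex_Icc 0 1)
  · -- S t > 0 on the open interval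
    have hSpos : ∀ t ∈ Ioo (0:ℝ) 1, 0 < s0 + t * u := by
      intro t ht
      have h : s0 + t * u = (1 - t) * s0 + t * (s0 + u) := by ring
      rw [h]
      rcases lt_or_eq_of_le hs0 with h0 | h0
      · have : 0 < (1 - t) * s0 := mul_pos (by linarith [ht.2]) h0
        nlinarith [mul_nonneg ht.1.le hs1]
      · rcases lt_or_eq_of_le hs1 with h1 | h1
        · have : 0 < t * (s0 + u) := mul_pos ht.1 h1
          nlinarith [mul_nonneg (by linarith [ht.2] : (0:ℝ) ≤ 1 - t) hs0]
        · exact absurd ⟨h0.symm, h1.symm⟩ hdeg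
    set g : ℝ → ℝ := fun t => (s0 + t * u) ^ α * (1 + (r0 + t * v) ^ 2) with hg
    set g1 : ℝ → ℝ := fun t =>
      α * u * (s0 + t * u) ^ (α - 1) * (1 + (r0 + t * v) ^ 2)
        + (s0 + t * u) ^ α * (2 * (r0 + t * v) * v) with hg1def
    set g2 : ℝ → ℝ := fun t =>
      α * (α - 1) * u ^ 2 * (s0 + t * u) ^ (α - 2) * (1 + (r0 + t * v) ^ 2)
        + 4 * α * u * v * (r0 + t * v) * (s0 + t * u) ^ (α - 1)
        + 2 * v ^ 2 * (s0 + t * u) ^ α with hg2def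
    have hS' : ∀ t : ℝ, HasDerivAt (fun t => s0 + t * u) u t := by
      intro t
      simpa using ((hasDerivAt_id t).mul_const u).const_add s0
    have hR' : ∀ t : ℝ, HasDerivAt (fun t => r0 + t * v) v t := by
      intro t
      simpa using ((hasDerivAt_id t).mul_const v).const_add r0
    have hq' : ∀ t : ℝ, HasDerivAt (fun t => 1 + (r0 + t * v) ^ 2) (2 * (r0 + t * v) * v) t := by
      intro t
      have := ((hR' t).fun_pow 2).const_add 1
      refine this.congr_deriv ?_
      push_cast
      ring
    have hg1 : ∀ t ∈ Ioo (0:ℝ) 1, HasDerivAt g (g1 t) t := by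
      intro t ht
      have hs := hSpos t ht
      have hpow : HasDerivAt (fun t => (s0 + t * u) ^ α) (α * (s0 + t * u) ^ (α - 1) * u) t :=
        by have := (Real.hasDerivAt_rpow_const (p := α) (Or.inl (ne_of_gt hs))).comp t (hS' t); exact this
      have := hpow.mul (hq' t)
      refine this.congr_deriv ?_
      simp only [hg1def]
      ring
    have hg2 : ∀ t ∈ Ioo (0:ℝ) 1, HasDerivAt g1 (g2 t) t := by
      intro t ht
      have hs := hSpos t ht
      have hpow1 : HasDerivAt (fun t => (s0 + t * u) ^ (α - 1))
          ((α - 1) * (s0 + t * u) ^ (α - 1 - 1) * u) t :=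
        by have := (Real.hasDerivAt_rpow_const (p := α - 1) (Or.inl (ne_of_gt hs))).comp t (hS' t); exact this
      have hpow : HasDerivAt (fun t => (s0 + t * u) ^ α) (α * (s0 + t * u) ^ (α - 1) * u) t :=
        by have := (Real.hasDerivAt_rpow_const (p := α) (Or.inl (ne_of_gt hs))).comp t (hS' t); exact this
      have h1 : HasDerivAt (fun t => α * u * (s0 + t * u) ^ (α - 1) * (1 + (r0 + t * v) ^ 2))
          ((α * u * ((α - 1) * (s0 + t * u) ^ (α - 1 - 1) * u)) * (1 + (r0 + t * v) ^ 2)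
            + (α * u * (s0 + t * u) ^ (α - 1)) * (2 * (r0 + t * v) * v)) t := by
        exact ((hpow1.const_mul (α * u)).mul (hq' t))
      have h2' : HasDerivAt (fun t => 2 * (r0 + t * v) * v) (2 * v * v) t := by
        simpa [mul_comm, mul_assoc] using ((hR' t).const_mul 2).mul_const v
      have h2 : HasDerivAt (fun t => (s0 + t * u) ^ α * (2 * (r0 + t * v) * v))
          ((α * (s0 + t * u) ^ (α - 1) * u) * (2 * (r0 + t * v) * v)
            + (s0 + t * u) ^ α * (2 * v * v)) t := hpow.mul h2'
      have := h1.add h2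
      refine this.congr_deriv ?_
      simp only [hg2def]
      rw [show α - 1 - 1 = α - 2 by ring]
      ring
    have hg2nonneg : ∀ t ∈ Ioo (0:ℝ) 1, 0 ≤ g2 t := by
      intro t ht
      set s := s0 + t * u with hsdef
      set r := r0 + t * v with hrdef
      have hs : 0 < s := hSpos t ht
      have hr : |r| < ρ := hRlt t (Ioo_subset_Icc_self ht)
      have hr2 : r ^ 2 < (α - 1) / (α + 1) := by
        rw [← hρ]
        calc r ^ 2 = |r| ^ 2 := (sq_abs r).symm
        _ < ρ ^ 2 := by
            have h0 : (0:ℝ) ≤ |r| := abs_nonneg r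
            have hρ0 : 0 ≤ ρ := le_trans h0 hr.le
            nlinarith
      have hr2' : r ^ 2 * (α + 1) < α - 1 := by
        have hpos : (0:ℝ) < α + 1 := by linarith
        exact (lt_div_iff₀ hpos).mp hr2
      have hA : 0 < α * (α - 1) * (1 + r ^ 2) := by nlinarith [sq_nonneg r]
      have hB : (4 * α * r) ^ 2 ≤ 8 * (α * (α - 1) * (1 + r ^ 2)) := by nlinarith [sq_nonneg r]
      have hQ : 0 ≤ α * (α - 1) * (1 + r ^ 2) * u ^ 2 + (4 * α * r) * u * (v * s)
          + 2 * (v * s) ^ 2 := by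
        nlinarith [sq_nonneg (2 * (α * (α - 1) * (1 + r ^ 2)) * u + (4 * α * r) * (v * s)),
          sq_nonneg (v * s), mul_nonneg (sub_nonneg.mpr hB) (sq_nonneg (v * s))]
      have e1 : s ^ (α - 1) = s ^ (α - 2) * s := by
        have h : α - 2 + 1 = α - 1 := by ring
        rw [← h, Real.rpow_add_one (ne_of_gt hs)]
      have e2 : s ^ α = s ^ (α - 2) * s * s := by
        have h : α - 2 + 1 + 1 = α := by ring
        conv_lhs => rw [← h]
        rw [Real.rpow_add_one (ne_of_gt hs), Real.rpow_add_one (ne_of_gt hs)]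
      have hfac : g2 t = s ^ (α - 2) * (α * (α - 1) * (1 + r ^ 2) * u ^ 2
          + (4 * α * r) * u * (v * s) + 2 * (v * s) ^ 2) := by
        simp only [hg2def, ← hsdef, ← hrdef, e1, e2]
        ring
      rw [hfac]
      exact mul_nonneg (Real.rpow_nonneg hs.le _) hQ
    have hcont : ContinuousOn g (Icc 0 1) := by
      have h1 : Continuous fun x : ℝ => x ^ α := Real.continuous_rpow_const hα0.le
      have h2 : Continuous fun t : ℝ => s0 + t * u :=
        continuous_const.add (continuous_id.mul continuous_const)
      have h3 : Continuous fun t : ℝ => 1 + (r0 + t * v) ^ 2 :=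
        continuous_const.add ((continuous_const.add (continuous_id.mul continuous_const)).pow 2)
      exact ((h1.comp h2).mul h3).continuousOn
    have hint : interior (Icc (0:ℝ) 1) = Ioo (0:ℝ) 1 := interior_Icc
    have hderiv1 : ∀ t ∈ Ioo (0:ℝ) 1, deriv g t = g1 t := fun t ht => (hg1 t ht).deriv
    apply convexOn_of_deriv2_nonneg (convex_Icc 0 1) hcont
    · rw [hint]
      exact fun t ht => (hg1 t ht).differentiableAt.differentiableWithinAt
    · rw [hint]
      intro t ht
      have heq : deriv g =ᶠ[nhds t] g1 :=
        Filter.eventually_of_mem (Ioo_mem_nhds ht.1 ht.2) hderiv1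
      exact ((hg2 t ht).differentiableAt.congr_of_eventuallyEq heq).differentiableWithinAt
    · rw [hint]
      intro t ht
      have heq : deriv g =ᶠ[nhds t] g1 :=
        Filter.eventually_of_mem (Ioo_mem_nhds ht.1 ht.2) hderiv1
      have : deriv (deriv g) t = g2 t := by
        rw [heq.deriv_eq]
        exact (hg2 t ht).deriv
      simpa [Function.iterate_succ, this] using hg2nonneg t ht
private lemma convex2D {α ρ : ℝ} (hα1 : 1 < α) (hα2 : α < 2)
    (hρ : ρ ^ 2 = (α - 1) / (α + 1)) :
    ConvexOn ℝ {q : ℝ × ℝ | 0 ≤ q.1 ∧ |q.2| < ρ}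
      (fun q => q.1 ^ α * (1 + q.2 ^ 2)) := by
  constructor
  · intro p hp q hq a b ha hb hab
    refine ⟨?_, ?_⟩
    · show 0 ≤ (a • p + b • q).1
      simp only [Prod.fst_add, Prod.smul_fst, smul_eq_mul]
      exact add_nonneg (mul_nonneg ha hp.1) (mul_nonneg hb hq.1)
    · show |(a • p + b • q).2| < ρ
      simp only [Prod.snd_add, Prod.smul_snd, smul_eq_mul]
      exact combo_abs_lt ha hb hab hp.2 hq.2
  · intro p hp q hq a b ha hb hab
    have hseg := seg_convex hα1 hα2 hρ p.1 (q.1 - p.1) p.2 (q.2 - p.2) hp.1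
      (by simpa using hq.1) hp.2 (by simpa using hq.2)
    have h0 : (0:ℝ) ∈ Set.Icc (0:ℝ) 1 := by norm_num
    have h1 : (1:ℝ) ∈ Set.Icc (0:ℝ) 1 := by norm_num
    have key := hseg.2 h0 h1 ha hb hab
    simp only [smul_eq_mul, mul_zero, mul_one, zero_add] at key
    have ea : a = 1 - b := by linarith
    have e1 : p.1 + b * (q.1 - p.1) = (a • p + b • q).1 := by
      simp only [Prod.fst_add, Prod.smul_fst, smul_eq_mul]; rw [ea]; ring
    have e2 : p.2 + b * (q.2 - p.2) = (a • p + b • q).2 := by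
      simp only [Prod.snd_add, Prod.smul_snd, smul_eq_mul]; rw [ea]; ring
    have e3 : p.1 + 0 * (q.1 - p.1) = p.1 := by ring
    have e4 : p.2 + 0 * (q.2 - p.2) = p.2 := by ring
    have e5 : p.1 + 1 * (q.1 - p.1) = q.1 := by ring
    have e6 : p.2 + 1 * (q.2 - p.2) = q.2 := by ring
    rw [e1, e2, e3, e4, e5, e6] at key
    exact key

/-- Pogorelov-type barrier: for `n ≥ 3`, `1 ≤ k < n/2`, and any `C > 0`, there is `ρ > 0`
such that `w(x,y) = C |x|^{2 - 2k/n} (1 + |y|^2)` is convex on the slab `{|y| < ρ}`. -/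
theorem pogorelov_barrier_convex (n k : ℕ) (hn : 3 ≤ n) (hk : 1 ≤ k) (hkn : 2 * k < n)
    (C : ℝ) (hC : 0 < C) :
    ∃ ρ : ℝ, 0 < ρ ∧
      ConvexOn ℝ
        {p : EuclideanSpace ℝ (Fin (n - k)) × EuclideanSpace ℝ (Fin k) | ‖p.2‖ < ρ}
        (fun p => C * ‖p.1‖ ^ ((2:ℝ) - 2 * k / n) * (1 + ‖p.2‖ ^ 2)) := by
  set α : ℝ := (2:ℝ) - 2 * k / n with hαdef
  have hn0 : (0:ℝ) < n := by positivity
  have hkn' : (2 * k : ℝ) < n := by exact_mod_cast hkn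
  have hk0 : (0:ℝ) < k := by exact_mod_cast hk
  have hα1 : 1 < α := by
    have : 2 * (k:ℝ) / n < 1 := (div_lt_one hn0).mpr (by push_cast at hkn' ⊢; linarith)
    simp only [hαdef]; linarith
  have hα2 : α < 2 := by
    have : 0 < 2 * (k:ℝ) / n := by positivity
    simp only [hαdef]; linarith
  have hαnn : (0:ℝ) ≤ α := by linarith
  set ρ : ℝ := Real.sqrt ((α - 1) / (α + 1)) with hρdef
  have hfrac : 0 < (α - 1) / (α + 1) := div_pos (by linarith) (by linarith)
  have hρpos : 0 < ρ := Real.sqrt_pos.mpr hfrac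
  have hρ2 : ρ ^ 2 = (α - 1) / (α + 1) := Real.sq_sqrt hfrac.le
  have h2D := convex2D hα1 hα2 hρ2
  refine ⟨ρ, hρpos, ?_, ?_⟩
  · -- convexity of the slab
    intro p hp q hq a b ha hb hab
    show ‖(a • p + b • q).2‖ < ρ
    simp only [Prod.snd_add, Prod.smul_snd]
    calc ‖a • p.2 + b • q.2‖ ≤ a * ‖p.2‖ + b * ‖q.2‖ := by
          calc ‖a • p.2 + b • q.2‖ ≤ ‖a • p.2‖ + ‖b • q.2‖ := norm_add_le _ _
          _ = a * ‖p.2‖ + b * ‖q.2‖ := by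
              rw [norm_smul, norm_smul, Real.norm_eq_abs, Real.norm_eq_abs,
                abs_of_nonneg ha, abs_of_nonneg hb]
    _ ≤ a * max ‖p.2‖ ‖q.2‖ + b * max ‖p.2‖ ‖q.2‖ := by
          gcongr
          · exact le_max_left _ _
          · exact le_max_right _ _
    _ = max ‖p.2‖ ‖q.2‖ := by rw [← add_mul, hab, one_mul]
    _ < ρ := max_lt hp hq
  · intro p hp q hq a b ha hb hab
    have hP1 : ((‖p.1‖, ‖p.2‖) : ℝ × ℝ) ∈ {q : ℝ × ℝ | 0 ≤ q.1 ∧ |q.2| < ρ} :=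
      ⟨norm_nonneg _, by rwa [abs_of_nonneg (norm_nonneg _)]⟩
    have hP2 : ((‖q.1‖, ‖q.2‖) : ℝ × ℝ) ∈ {q : ℝ × ℝ | 0 ≤ q.1 ∧ |q.2| < ρ} :=
      ⟨norm_nonneg _, by rwa [abs_of_nonneg (norm_nonneg _)]⟩
    have hcomb := h2D.2 hP1 hP2 ha hb hab
    simp only [Prod.smul_mk, Prod.mk_add_mk, smul_eq_mul] at hcomb
    -- monotonicity step
    have hx : ‖(a • p + b • q).1‖ ≤ a * ‖p.1‖ + b * ‖q.1‖ := by
      simp only [Prod.fst_add, Prod.smul_fst]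
      calc ‖a • p.1 + b • q.1‖ ≤ ‖a • p.1‖ + ‖b • q.1‖ := norm_add_le _ _
      _ = a * ‖p.1‖ + b * ‖q.1‖ := by
          rw [norm_smul, norm_smul, Real.norm_eq_abs, Real.norm_eq_abs,
            abs_of_nonneg ha, abs_of_nonneg hb]
    have hy : ‖(a • p + b • q).2‖ ≤ a * ‖p.2‖ + b * ‖q.2‖ := by
      simp only [Prod.snd_add, Prod.smul_snd]
      calc ‖a • p.2 + b • q.2‖ ≤ ‖a • p.2‖ + ‖b • q.2‖ := norm_add_le _ _
      _ = a * ‖p.2‖ + b * ‖q.2‖ := by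
          rw [norm_smul, norm_smul, Real.norm_eq_abs, Real.norm_eq_abs,
            abs_of_nonneg ha, abs_of_nonneg hb]
    have hmono : ‖(a • p + b • q).1‖ ^ α * (1 + ‖(a • p + b • q).2‖ ^ 2) ≤
        (a * ‖p.1‖ + b * ‖q.1‖) ^ α * (1 + (a * ‖p.2‖ + b * ‖q.2‖) ^ 2) := by
      have h1 : ‖(a • p + b • q).1‖ ^ α ≤ (a * ‖p.1‖ + b * ‖q.1‖) ^ α :=
        Real.rpow_le_rpow (norm_nonneg _) hx hαnn
      have h2 : 1 + ‖(a • p + b • q).2‖ ^ 2 ≤ 1 + (a * ‖p.2‖ + b * ‖q.2‖) ^ 2 := by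
        have := pow_le_pow_left₀ (norm_nonneg (a • p + b • q).2) hy 2
        linarith
      exact mul_le_mul h1 h2 (by positivity) (Real.rpow_nonneg (by positivity) _)
    have hchain := hmono.trans hcomb
    calc C * ‖(a • p + b • q).1‖ ^ α * (1 + ‖(a • p + b • q).2‖ ^ 2)
        = C * (‖(a • p + b • q).1‖ ^ α * (1 + ‖(a • p + b • q).2‖ ^ 2)) := by ring
    _ ≤ C * (a * (‖p.1‖ ^ α * (1 + ‖p.2‖ ^ 2)) + b * (‖q.1‖ ^ α * (1 + ‖q.2‖ ^ 2))) :=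
        mul_le_mul_of_nonneg_left hchain hC.le
    _ = a * (C * ‖p.1‖ ^ α * (1 + ‖p.2‖ ^ 2)) + b * (C * ‖q.1‖ ^ α * (1 + ‖q.2‖ ^ 2)) := by ring
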